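/- Let l be a prime and let V be the 2-dimensional representation of Z/l over Z/l in which a generator acts by the unipotent matrix [[1,1],[0,1]]. Then the (l-1)-st symmetric power S^{l-1}(V) is isomorphic, as a Z/l-linear representation of Z/l, to the regular representation (Z/l)[Z/l]. -/

import Mathlib

open MvPolynomial

/-- The substitution endomorphism of `(ℤ/l)[x₀, x₁]` given by `x₀ ↦ x₀`, `x₁ ↦ x₀ + x₁`,
i.e. the action of the generator of `ℤ/l` on the symmetric algebra of the 2-dimensional
unipotent representation `V` (generator acting by `[[1,1],[0,1]]`). -/
noncomputable def unipotentSubst (l : ℕ) :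
    MvPolynomial (Fin 2) (ZMod l) →ₐ[ZMod l] MvPolynomial (Fin 2) (ZMod l) :=
  MvPolynomial.aeval ![X 0, X 0 + X 1]

/-! ### Auxiliary material -/

/-- Evaluation at all points `(1, t)` as a linear map. -/
noncomputable def evalLin (l : ℕ) :
    MvPolynomial (Fin 2) (ZMod l) →ₗ[ZMod l] (ZMod l → ZMod l) :=
  LinearMap.pi fun t => (MvPolynomial.aeval ![1, t]).toLinearMap

lemma evalLin_apply (l : ℕ) (p : MvPolynomial (Fin 2) (ZMod l)) (t : ZMod l) :
    evalLin l p t = MvPolynomial.aeval ![1, t] p := rfl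

lemma evalLin_eq_eval (l : ℕ) (p : MvPolynomial (Fin 2) (ZMod l)) (t : ZMod l) :
    evalLin l p t = eval ![1, t] p := by
  rw [evalLin_apply, ← coe_aeval_eq_eval]; rfl

lemma evalLin_subst (l : ℕ) (p : MvPolynomial (Fin 2) (ZMod l)) (t : ZMod l) :
    evalLin l (MvPolynomial.aeval ![X 0, X 0 + X 1] p) t = evalLin l p (1 + t) := by
  rw [evalLin_apply, evalLin_apply]
  have : (MvPolynomial.aeval ![1, t]).comp (MvPolynomial.aeval (R := ZMod l) ![X 0, X 0 + X 1])
      = MvPolynomial.aeval ![1, 1 + t] := by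
    rw [comp_aeval]
    congr 1
    funext i
    fin_cases i <;> simp
  exact (congrArg (· p) this)

lemma stab_aux (l : ℕ) (n : ℕ) (p : MvPolynomial (Fin 2) (ZMod l))
    (hp : p.IsHomogeneous n) :
    (MvPolynomial.aeval ![X 0, X 0 + X 1] p : MvPolynomial (Fin 2) (ZMod l)).IsHomogeneous n := by
  have := hp.aeval (S := ZMod l) (τ := Fin 2) (n := 1) ![X 0, X 0 + X 1] ?_
  · simpa using this
  · intro i
    fin_cases i
    · simpa using isHomogeneous_X (ZMod l) (0 : Fin 2)
    · simpa using (isHomogeneous_X (ZMod l) (0 : Fin 2)).add (isHomogeneous_X (ZMod l) 1)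

lemma deg_aux (l n : ℕ) (p : MvPolynomial (Fin 2) (ZMod l)) (hp : p.IsHomogeneous n)
    (m : Fin 2 →₀ ℕ) (hm : coeff m p ≠ 0) : m 0 + m 1 = n := by
  have h := hp hm
  rw [show (Finsupp.weight 1) m = m.degree from (Finsupp.degree_eq_weight_one (R := ℕ) ▸ rfl)] at h
  rw [← h, Finsupp.degree_apply]
  have : ∑ i ∈ m.support, m i = ∑ i : Fin 2, m i :=
    Finset.sum_subset (Finset.subset_univ _)
      (by intro i _ hi; simpa using Finsupp.notMem_support_iff.mp hi)
  rw [this, Fin.sum_univ_two]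

lemma inj_aux (l : ℕ) (hl : l.Prime) [Fact l.Prime] (p : MvPolynomial (Fin 2) (ZMod l))
    (hp : p.IsHomogeneous (l - 1)) (h0 : ∀ t : ZMod l, eval ![1, t] p = 0) : p = 0 := by
  classical
  set q : Polynomial (ZMod l) :=
    ∑ m ∈ p.support, Polynomial.C (coeff m p) * Polynomial.X ^ (m 1) with hq
  have heval : ∀ t : ZMod l, q.eval t = eval ![1, t] p := by
    intro t
    rw [eval_eq', hq]
    simp only [Polynomial.eval_finset_sum, Polynomial.eval_mul, Polynomial.eval_C,
      Polynomial.eval_pow, Polynomial.eval_X]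
    refine Finset.sum_congr rfl fun m _ => ?_
    rw [Fin.prod_univ_two]
    simp
  have hqz : q = 0 := by
    apply Polynomial.eq_zero_of_natDegree_lt_card_of_eval_eq_zero q (f := (id : ZMod l → ZMod l))
      Function.injective_id (fun t => by rw [id, heval t, h0 t])
    rw [ZMod.card l]
    refine lt_of_le_of_lt (Polynomial.natDegree_sum_le_of_forall_le _ _ (n := l - 1) ?_) ?_
    · intro m hm
      refine le_trans (Polynomial.natDegree_C_mul_le _ _) ?_
      rw [Polynomial.natDegree_X_pow]
      have := deg_aux l (l - 1) p hp m (mem_support_iff.mp hm)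
      omega
    · have := hl.one_lt; omega
  ext m
  rw [coeff_zero]
  by_contra hm
  have hmem : m ∈ p.support := mem_support_iff.mpr hm
  have : Polynomial.coeff q (m 1) = coeff m p := by
    rw [hq, Polynomial.finset_sum_coeff]
    rw [Finset.sum_eq_single m]
    · simp
    · intro m' hm' hne
      simp only [Polynomial.coeff_C_mul, Polynomial.coeff_X_pow]
      rw [if_neg, mul_zero]
      intro hEq
      apply hne
      have h1 := deg_aux l (l - 1) p hp m (mem_support_iff.mp hmem)
      have h2 := deg_aux l (l - 1) p hp m' (mem_support_iff.mp hm')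
      ext i
      fin_cases i
      · show m' 0 = m 0; omega
      · show m' 1 = m 1; omega
    · intro h; exact absurd hmem h
  rw [hqz] at this
  simp at this
  exact hm this.symm

/-- Homogenized Lagrange basis polynomial. -/
noncomputable def lagN (l : ℕ) [NeZero l] (a : ZMod l) : MvPolynomial (Fin 2) (ZMod l) :=
  C ((∏ b ∈ Finset.univ.erase a, (a - b))⁻¹) * ∏ b ∈ Finset.univ.erase a, (X 1 - C b * X 0)

lemma lagN_homog (l : ℕ) [NeZero l] (a : ZMod l) : (lagN l a).IsHomogeneous (l - 1) := by
  have h := MvPolynomial.IsHomogeneous.prod (Finset.univ.erase a)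
      (fun b => (X 1 - C b * X 0 : MvPolynomial (Fin 2) (ZMod l))) (fun _ => 1)
      (fun b _ => (isHomogeneous_X _ _).sub (isHomogeneous_C_mul_X _ _))
  rw [Finset.sum_const, smul_eq_mul, mul_one, Finset.card_erase_of_mem (Finset.mem_univ a),
    Finset.card_univ, ZMod.card] at h
  simpa [lagN] using h.C_mul ((∏ b ∈ Finset.univ.erase a, (a - b))⁻¹)

lemma lagN_eval (l : ℕ) (hl : l.Prime) [Fact l.Prime] (a t : ZMod l) :
    eval ![1, t] (lagN l a) = if t = a then 1 else 0 := by
  rw [lagN, map_mul, eval_C, map_prod]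
  have hfac : ∀ b : ZMod l, eval ![1, t] (X 1 - C b * X 0 : MvPolynomial (Fin 2) (ZMod l))
      = t - b := by intro b; simp
  simp only [hfac]
  split_ifs with h
  · subst h
    rw [inv_mul_cancel₀]
    refine Finset.prod_ne_zero_iff.mpr fun b hb => ?_
    rw [sub_ne_zero]
    exact fun hh => (Finset.mem_erase.mp hb).1 hh.symm
  · rw [Finset.prod_eq_zero (Finset.mem_erase.mpr ⟨h, Finset.mem_univ t⟩) (sub_self t), mul_zero]

lemma surj_aux (l : ℕ) (hl : l.Prime) [Fact l.Prime] (f : ZMod l → ZMod l) :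
    ∃ p : MvPolynomial (Fin 2) (ZMod l), p.IsHomogeneous (l - 1) ∧
      ∀ t, eval ![1, t] p = f t := by
  haveI : NeZero l := ⟨hl.ne_zero⟩
  refine ⟨∑ a : ZMod l, f a • lagN l a, ?_, ?_⟩
  · rw [← mem_homogeneousSubmodule]
    exact Submodule.sum_mem _ fun a _ => Submodule.smul_mem _ _
      ((mem_homogeneousSubmodule _ _).mpr (lagN_homog l a))
  · intro t
    rw [map_sum]
    simp only [smul_eq_C_mul, map_mul, eval_C, lagN_eval l hl]
    rw [Finset.sum_eq_single t]
    · simp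
    · intro b _ hb; rw [if_neg (Ne.symm hb), mul_zero]
    · intro h; exact absurd (Finset.mem_univ t) h

/-- The restriction of `evalLin` to the homogeneous part of degree `l - 1`. -/
noncomputable def Emap (l : ℕ) :
    (homogeneousSubmodule (Fin 2) (ZMod l) (l - 1)) →ₗ[ZMod l] (ZMod l → ZMod l) :=
  (evalLin l).comp (Submodule.subtype _)

lemma Emap_bij (l : ℕ) (hl : l.Prime) [Fact l.Prime] : Function.Bijective (Emap l) := by
  constructor
  · rw [← LinearMap.ker_eq_bot, LinearMap.ker_eq_bot']
    rintro ⟨p, hp⟩ h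
    apply Subtype.ext
    refine inj_aux l hl p ((mem_homogeneousSubmodule _ _).mp hp) fun t => ?_
    rw [← evalLin_eq_eval]
    exact congrFun h t
  · intro f
    obtain ⟨p, h1, h2⟩ := surj_aux l hl f
    exact ⟨⟨p, (mem_homogeneousSubmodule _ _).mpr h1⟩,
      funext fun t => by rw [Emap, LinearMap.comp_apply, Submodule.subtype_apply,
        evalLin_eq_eval]; exact h2 t⟩

theorem stmt_2 (l : ℕ) (hl : l.Prime) [Fact l.Prime] :
    ∃ (hstab : ∀ p ∈ homogeneousSubmodule (Fin 2) (ZMod l) (l - 1),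
        unipotentSubst l p ∈ homogeneousSubmodule (Fin 2) (ZMod l) (l - 1))
      (φ : homogeneousSubmodule (Fin 2) (ZMod l) (l - 1) ≃ₗ[ZMod l]
        MonoidAlgebra (ZMod l) (Multiplicative (ZMod l))),
      ∀ (p : MvPolynomial (Fin 2) (ZMod l))
        (hp : p ∈ homogeneousSubmodule (Fin 2) (ZMod l) (l - 1)),
        φ ⟨unipotentSubst l p, hstab p hp⟩ =
          MonoidAlgebra.of (ZMod l) (Multiplicative (ZMod l))
            (Multiplicative.ofAdd (1 : ZMod l)) * φ ⟨p, hp⟩ := by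
  classical
  have hstab : ∀ p ∈ homogeneousSubmodule (Fin 2) (ZMod l) (l - 1),
      unipotentSubst l p ∈ homogeneousSubmodule (Fin 2) (ZMod l) (l - 1) := by
    intro p hp
    exact (mem_homogeneousSubmodule _ _).mpr
      (stab_aux l (l - 1) p ((mem_homogeneousSubmodule _ _).mp hp))
  -- the equivalence of index types
  let e : Multiplicative (ZMod l) ≃ ZMod l := Multiplicative.toAdd.trans (Equiv.neg _)
  let φ : (homogeneousSubmodule (Fin 2) (ZMod l) (l - 1)) ≃ₗ[ZMod l]
      MonoidAlgebra (ZMod l) (Multiplicative (ZMod l)) :=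
    (LinearEquiv.ofBijective (Emap l) (Emap_bij l hl)).trans
      ((LinearEquiv.funCongrLeft (ZMod l) (ZMod l) e).trans
        ((Finsupp.linearEquivFunOnFinite (ZMod l) (ZMod l) (Multiplicative (ZMod l))).symm.trans
          (MonoidAlgebra.coeffLinearEquiv (ZMod l)).symm))
  have key : ∀ (s : homogeneousSubmodule (Fin 2) (ZMod l) (l - 1))
      (a : Multiplicative (ZMod l)),
      (φ s : MonoidAlgebra (ZMod l) (Multiplicative (ZMod l))).coeff a
        = evalLin l (s : MvPolynomial (Fin 2) (ZMod l)) (-a.toAdd) := by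
    intro s a
    show ((Finsupp.linearEquivFunOnFinite (ZMod l) (ZMod l)
        (Multiplicative (ZMod l))).symm
        ((LinearEquiv.funCongrLeft (ZMod l) (ZMod l) e)
          (LinearEquiv.ofBijective (Emap l) (Emap_bij l hl) s))) a = _
    rfl
  refine ⟨hstab, φ, ?_⟩
  intro p hp
  apply MonoidAlgebra.ext
  apply Finsupp.ext
  intro a
  rw [key]
  have hsub : (((⟨unipotentSubst l p, hstab p hp⟩ :
      homogeneousSubmodule (Fin 2) (ZMod l) (l - 1)) :
      MvPolynomial (Fin 2) (ZMod l))) = MvPolynomial.aeval ![X 0, X 0 + X 1] p := rfl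
  rw [hsub, evalLin_subst]
  rw [MonoidAlgebra.of_apply, MonoidAlgebra.single_mul_apply, one_mul, key]
  have harg : (1 : ZMod l) + -a.toAdd = -((Multiplicative.ofAdd (1 : ZMod l))⁻¹ * a).toAdd := by
    simp [toAdd_mul]
    ring
  rw [← harg]
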